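/- Let I = {0,…,M} be partitioned into two disjoint subsets L = {l₁ > … > l_N} and K = {k₁ > … > k_m} with N + m = M + 1. Writing V(x₁,…,x_n) = ∏_{i<j}(x_i - x_j) for the Vandermonde, one has V(l₁,…,l_N) = (0! · 1! · ⋯ · M!) · V(k₁,…,k_m) / ∏_{j=1}^m (k_j! · (M - k_j)!). -/

import Mathlib

open Finset

private lemma prod_add_one_eq_fact (n : ℕ) : ∏ i ∈ range n, (i+1) = n.factorial := by
  induction n with
  | zero => simp
  | succ n ih => rw [Finset.prod_range_succ, ih, Nat.factorial_succ, Nat.mul_comm]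

/-- For `a ≤ M`, the product of `|a - b|` over all `b ≠ a` in `{0,…,M}` is `a!(M-a)!`. -/
private lemma factB (M a : ℕ) (ha : a ≤ M) :
    ∏ b ∈ (range (M+1)).erase a, |(a:ℚ) - b| =
      (a.factorial : ℚ) * ((M - a).factorial : ℚ) := by
  have hsplit : (range (M+1)).erase a = range a ∪ Ioc a M := by
    ext b
    simp only [mem_erase, mem_range, mem_union, mem_Ioc]
    omega
  have hdisj : Disjoint (range a) (Ioc a M) := by
    rw [Finset.disjoint_left]
    intro b hb hb'
    simp only [mem_range] at hb
    simp only [mem_Ioc] at hb'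
    omega
  rw [hsplit, Finset.prod_union hdisj]
  have h1 : ∏ b ∈ range a, |(a:ℚ) - b| = (a.factorial : ℚ) := by
    have : ∀ b ∈ range a, |(a:ℚ) - b| = ((a - b : ℕ) : ℚ) := by
      intro b hb
      simp only [mem_range] at hb
      rw [Nat.cast_sub hb.le, abs_of_pos]
      have : (b:ℚ) < a := by exact_mod_cast hb
      linarith
    rw [Finset.prod_congr rfl this, ← Nat.cast_prod]
    congr 1
    rw [← Finset.prod_range_reflect]
    rw [← prod_add_one_eq_fact a]
    apply Finset.prod_congr rfl
    intro b hb
    simp only [mem_range] at hb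
    omega
  have h2 : ∏ b ∈ Ioc a M, |(a:ℚ) - b| = ((M - a).factorial : ℚ) := by
    have : ∀ b ∈ Ioc a M, |(a:ℚ) - b| = ((b - a : ℕ) : ℚ) := by
      intro b hb
      simp only [mem_Ioc] at hb
      rw [abs_sub_comm, Nat.cast_sub hb.1.le, abs_of_pos]
      have : (a:ℚ) < b := by exact_mod_cast hb.1
      linarith
    rw [Finset.prod_congr rfl this, ← Nat.cast_prod]
    congr 1
    have hmap : Ioc a M = (range (M - a)).map ⟨fun x => x + (a+1), add_left_injective (a+1)⟩ := by
      ext b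
      simp only [mem_Ioc, mem_map, mem_range, Function.Embedding.coeFn_mk]
      constructor
      · intro hb; exact ⟨b - (a+1), by omega, by omega⟩
      · rintro ⟨x, hx, rfl⟩
        show a < x + (a+1) ∧ x + (a+1) ≤ M
        omega
    rw [hmap, Finset.prod_map]
    simp only [Function.Embedding.coeFn_mk]
    rw [← prod_add_one_eq_fact (M - a)]
    apply Finset.prod_congr rfl
    intro x hx
    omega
  rw [h1, h2]

private lemma strictAntiInj {n : ℕ} (f : Fin n → ℕ)
    (hf : ∀ i j : Fin n, i < j → f j < f i) : Function.Injective f := by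
  intro i j h
  rcases lt_trichotomy i j with hij|hij|hij
  · exact absurd h (by have := hf i j hij; omega)
  · exact hij
  · exact absurd h (by have := hf j i hij; omega)

/-- The squared Vandermonde as product over ordered pairs of the image. -/
private lemma vsq {n : ℕ} (f : Fin n → ℕ)
    (hf : ∀ i j : Fin n, i < j → f j < f i) :
    ∏ a ∈ Finset.image f Finset.univ, ∏ b ∈ (Finset.image f Finset.univ).erase a,
        |(a:ℚ) - b| =
      (∏ i : Fin n, ∏ j ∈ Finset.Ioi i, ((f i : ℚ) - (f j : ℚ)))^2 := by
  have hinj := strictAntiInj f hf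
  rw [Finset.prod_image (fun a _ b _ h => hinj h)]
  have step1 : ∀ i : Fin n,
      ∏ b ∈ (Finset.image f Finset.univ).erase (f i), |(f i : ℚ) - b| =
        ∏ j ∈ Finset.univ.erase i, |(f i : ℚ) - f j| := by
    intro i
    rw [← Finset.image_erase hinj, Finset.prod_image (fun a _ b _ h => hinj h)]
  rw [Finset.prod_congr rfl (fun i _ => step1 i)]
  have hsplit : ∀ i : Fin n, Finset.univ.erase i = Iio i ∪ Ioi i := by
    intro i
    ext j
    simp only [mem_erase, mem_univ, and_true, mem_union, mem_Iio, mem_Ioi]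
    exact ne_iff_lt_or_gt
  have hdis : ∀ i : Fin n, Disjoint (Iio i) (Ioi i) := by
    intro i
    rw [Finset.disjoint_left]
    intro j hj hj'
    simp only [mem_Iio] at hj
    simp only [mem_Ioi] at hj'
    exact absurd (hj.trans hj') (lt_irrefl j)
  have step2 : ∀ i : Fin n,
      ∏ j ∈ Finset.univ.erase i, |(f i : ℚ) - f j| =
        (∏ j ∈ Iio i, |(f i : ℚ) - f j|) * ∏ j ∈ Ioi i, |(f i : ℚ) - f j| := by
    intro i
    rw [hsplit i, Finset.prod_union (hdis i)]
  rw [Finset.prod_congr rfl (fun i _ => step2 i), Finset.prod_mul_distrib]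
  have swap : ∏ i : Fin n, ∏ j ∈ Iio i, |(f i : ℚ) - f j| =
      ∏ i : Fin n, ∏ j ∈ Ioi i, |(f j : ℚ) - f i| := by
    apply Finset.prod_comm'
    intro x y
    simp only [mem_univ, mem_Iio, mem_Ioi, true_and, and_true]
  rw [swap]
  have habs : ∀ i : Fin n, ∀ j ∈ Ioi i, |(f j : ℚ) - f i| = (f i : ℚ) - f j := by
    intro i j hj
    simp only [mem_Ioi] at hj
    rw [abs_sub_comm, abs_of_pos]
    have := hf i j hj
    have : (f j : ℚ) < f i := by exact_mod_cast this
    linarith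
  have habs' : ∀ i : Fin n, ∀ j ∈ Ioi i, |(f i : ℚ) - f j| = (f i : ℚ) - f j := by
    intro i j hj
    simp only [mem_Ioi] at hj
    rw [abs_of_pos]
    have := hf i j hj
    have : (f j : ℚ) < f i := by exact_mod_cast this
    linarith
  rw [← Finset.prod_mul_distrib]
  rw [sq, ← Finset.prod_mul_distrib]
  apply Finset.prod_congr rfl
  intro i _
  rw [← Finset.prod_mul_distrib, ← Finset.prod_mul_distrib]
  apply Finset.prod_congr rfl
  intro j hj
  rw [habs i j hj, habs' i j hj]

/-- For complementary strictly decreasing configurations L = (l₁>…>l_N) and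
K = (k₁>…>k_m) partitioning {0,…,M}, the Vandermonde of L equals
the superfactorial times the Vandermonde of K divided by ∏ k_j!(M-k_j)!. -/
theorem stmt_1 (M N m : ℕ) (hNm : N + m = M + 1)
    (l : Fin N → ℕ) (k : Fin m → ℕ)
    (hl : ∀ i j : Fin N, i < j → l j < l i)
    (hk : ∀ i j : Fin m, i < j → k j < k i)
    (hdisj : Disjoint (Finset.image l Finset.univ) (Finset.image k Finset.univ))
    (hunion : Finset.image l Finset.univ ∪ Finset.image k Finset.univ
      = Finset.range (M + 1)) :
    (∏ i : Fin N, ∏ j ∈ Finset.Ioi i, ((l i : ℚ) - (l j : ℚ))) =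
      (∏ i ∈ Finset.range (M + 1), (Nat.factorial i : ℚ)) *
        (∏ i : Fin m, ∏ j ∈ Finset.Ioi i, ((k i : ℚ) - (k j : ℚ))) /
        ∏ j : Fin m, ((Nat.factorial (k j) : ℚ) * (Nat.factorial (M - k j) : ℚ)) := by
  classical
  set L := Finset.image l Finset.univ with hL
  set K := Finset.image k Finset.univ with hK
  have hlinj := strictAntiInj l hl
  have hkinj := strictAntiInj k hk
  set VL := ∏ i : Fin N, ∏ j ∈ Finset.Ioi i, ((l i : ℚ) - (l j : ℚ)) with hVL
  set VK := ∏ i : Fin m, ∏ j ∈ Finset.Ioi i, ((k i : ℚ) - (k j : ℚ)) with hVK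
  set sf := ∏ i ∈ Finset.range (M + 1), (Nat.factorial i : ℚ) with hsf
  set Cl := ∏ a ∈ L, ∏ b ∈ K, |(a:ℚ) - b| with hCl
  -- membership facts
  have hKle : ∀ a ∈ K, a ≤ M := by
    intro a ha
    have : a ∈ Finset.range (M+1) := hunion ▸ Finset.mem_union_right L ha
    simpa [Nat.lt_succ_iff] using this
  have hLle : ∀ a ∈ L, a ≤ M := by
    intro a ha
    have : a ∈ Finset.range (M+1) := hunion ▸ Finset.mem_union_left K ha
    simpa [Nat.lt_succ_iff] using this
  -- squared Vandermondes
  have hVLsq := vsq l hl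
  have hVKsq := vsq k hk
  -- full product as sf^2
  have hPS : ∏ a ∈ Finset.range (M+1), ∏ b ∈ (Finset.range (M+1)).erase a,
      |(a:ℚ) - b| = sf^2 := by
    have : ∀ a ∈ Finset.range (M+1),
        ∏ b ∈ (Finset.range (M+1)).erase a, |(a:ℚ) - b| =
          (a.factorial : ℚ) * ((M - a).factorial : ℚ) := by
      intro a ha
      exact factB M a (by simpa [Nat.lt_succ_iff] using ha)
    rw [Finset.prod_congr rfl this, Finset.prod_mul_distrib]
    have hrefl : ∏ a ∈ Finset.range (M+1), ((M - a).factorial : ℚ) =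
        ∏ a ∈ Finset.range (M+1), (a.factorial : ℚ) := by
      rw [← Finset.prod_range_reflect (fun j => ((j).factorial : ℚ)) (M+1)]
      apply Finset.prod_congr rfl
      intro a ha
      norm_num
    rw [hrefl, hsf, sq]
  -- split the full product
  have hnotK : ∀ a ∈ L, a ∉ K := fun a ha => Finset.disjoint_left.mp hdisj ha
  have hnotL : ∀ a ∈ K, a ∉ L := fun a ha => Finset.disjoint_right.mp hdisj ha
  have hsplit : ∏ a ∈ Finset.range (M+1), ∏ b ∈ (Finset.range (M+1)).erase a,
      |(a:ℚ) - b| =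
      ((∏ a ∈ L, ∏ b ∈ L.erase a, |(a:ℚ) - b|) * Cl) *
      ((∏ a ∈ K, ∏ b ∈ L, |(a:ℚ) - b|) *
        ∏ a ∈ K, ∏ b ∈ K.erase a, |(a:ℚ) - b|) := by
    rw [← hunion, Finset.prod_union hdisj]
    congr 1
    · rw [← Finset.prod_mul_distrib]
      apply Finset.prod_congr rfl
      intro a ha
      rw [Finset.erase_union_distrib, Finset.erase_eq_of_notMem (hnotK a ha),
        Finset.prod_union (Finset.disjoint_of_subset_left (Finset.erase_subset a L) hdisj)]
    · rw [← Finset.prod_mul_distrib]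
      apply Finset.prod_congr rfl
      intro a ha
      rw [Finset.erase_union_distrib, Finset.erase_eq_of_notMem (hnotL a ha),
        Finset.prod_union (Finset.disjoint_of_subset_right (Finset.erase_subset a K) hdisj)]
  have hCk : ∏ a ∈ K, ∏ b ∈ L, |(a:ℚ) - b| = Cl := by
    rw [hCl, Finset.prod_comm]
    apply Finset.prod_congr rfl
    intro a _
    apply Finset.prod_congr rfl
    intro b _
    exact abs_sub_comm _ _
  -- the denominator
  have hD : ∏ j : Fin m, ((Nat.factorial (k j) : ℚ) * (Nat.factorial (M - k j) : ℚ))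
      = Cl * VK^2 := by
    have h1 : ∏ j : Fin m, ((Nat.factorial (k j) : ℚ) * (Nat.factorial (M - k j) : ℚ))
        = ∏ a ∈ K, ((a.factorial : ℚ) * ((M - a).factorial : ℚ)) := by
      rw [hK, Finset.prod_image (fun a _ b _ h => hkinj h)]
    rw [h1]
    have h2 : ∀ a ∈ K, (a.factorial : ℚ) * ((M - a).factorial : ℚ) =
        ∏ b ∈ (Finset.range (M+1)).erase a, |(a:ℚ) - b| := by
      intro a ha
      exact (factB M a (hKle a ha)).symm
    rw [Finset.prod_congr rfl h2]
    have h3 : ∀ a ∈ K, ∏ b ∈ (Finset.range (M+1)).erase a, |(a:ℚ) - b| =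
        (∏ b ∈ L, |(a:ℚ) - b|) * ∏ b ∈ K.erase a, |(a:ℚ) - b| := by
      intro a ha
      rw [← hunion, Finset.erase_union_distrib, Finset.erase_eq_of_notMem (hnotL a ha),
        Finset.prod_union (Finset.disjoint_of_subset_right (Finset.erase_subset a K) hdisj)]
    rw [Finset.prod_congr rfl h3, Finset.prod_mul_distrib, hCk, hVKsq]
  -- positivity
  have hVLpos : 0 < VL := by
    apply Finset.prod_pos
    intro i _
    apply Finset.prod_pos
    intro j hj
    simp only [mem_Ioi] at hj
    have := hl i j hj
    have : (l j : ℚ) < l i := by exact_mod_cast this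
    linarith
  have hVKpos : 0 < VK := by
    apply Finset.prod_pos
    intro i _
    apply Finset.prod_pos
    intro j hj
    simp only [mem_Ioi] at hj
    have := hk i j hj
    have : (k j : ℚ) < k i := by exact_mod_cast this
    linarith
  have hClpos : 0 < Cl := by
    apply Finset.prod_pos
    intro a ha
    apply Finset.prod_pos
    intro b hb
    have hab : a ≠ b := by
      intro h
      exact hnotK a ha (h ▸ hb)
    have : (a:ℚ) ≠ b := by exact_mod_cast hab
    exact abs_pos.mpr (sub_ne_zero.mpr this)
  have hsfpos : 0 < sf := by
    apply Finset.prod_pos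
    intro i _
    exact_mod_cast Nat.factorial_pos i
  clear_value VL VK sf Cl L K
  -- sf = VL * VK * Cl
  have hkey : sf = VL * VK * Cl := by
    have hsq : sf^2 = (VL * VK * Cl)^2 := by
      rw [← hPS, hsplit, hCk, hL, hK, hVLsq, hVKsq, ← hVL, ← hVK]
      ring
    have hb : 0 < VL * VK * Cl := mul_pos (mul_pos hVLpos hVKpos) hClpos
    have h' : (sf - VL * VK * Cl) * (sf + VL * VK * Cl) = 0 := by linear_combination hsq
    rcases mul_eq_zero.mp h' with h0 | h0
    · linarith
    · linarith
  rw [hD, hkey]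
  field_simp
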